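/- Fix d ≥ 2, p ∈ (0,1) and λ ∈ (0,1). Let E = {f_1, f_{-1}, f_2, f_{-2}} be the four edges of Z^d joining the origin to ±e_1 and ±e_2, and for a local configuration z ∈ {0,1}^E let μ(z) denote the ℙ_{p,λ,d}-probability that the restriction of the edge configuration to E equals z. Let x be the configuration with exactly f_1 and f_{-1} open, and y the configuration with exactly f_1 and f_2 open. Then μ(x ∨ y)·μ(x ∧ y) − μ(x)·μ(y) = [p λ³(1−λ)]·[p λ (1−λ)³] − [p λ²(1−λ)² + (1−p) λ (1−λ)]·[p λ²(1−λ)²] < 0; in particular the marginal edge law fails the lattice condition μ(x∨y)μ(x∧y) ≥ μ(x)μ(y). -/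

import Mathlib

open MeasureTheory ENNReal

namespace AlignmentPercolation

/-- Sites of the lattice `ℤ^d`. -/
abbrev Site (d : ℕ) := Fin d → ℤ

/-- A site configuration: `true` means occupied. -/
abbrev SiteCfg (d : ℕ) := Site d → Bool

/-- Labels (open/closed) attached to (potential) segments, indexed by their ordered
pair of endpoints. -/
abbrev PairLabels (d : ℕ) := Site d × Site d → Bool

/-- A configuration of the independent alignment percolation model: a site
configuration together with independent labels for the segments. -/
abbrev Cfg (d : ℕ) := SiteCfg d × PairLabels d

/-- Nearest-neighbour edges of `ℤ^d`, indexed by their lower endpoint and direction: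
`(u, i)` is the edge from `u` to `u + e_i`. -/
abbrev EdgeIdx (d : ℕ) := Site d × Fin d

/-- The point obtained from `u` by replacing its `i`-th coordinate with `a`. -/
def seg {d : ℕ} (u : Site d) (i : Fin d) (a : ℤ) : Site d := Function.update u i a

/-- The point `u + e_i`. -/
def up {d : ℕ} (u : Site d) (i : Fin d) : Site d := seg u i (u i + 1)

/-- The skewed doubling map underlying the construction of an i.i.d.
Bernoulli(p) sequence from a single uniform random variable on `[0,1)`. -/
noncomputable def bernShift (p : ℝ) (x : ℝ) : ℝ :=
  if x < p then x / p else (x - p) / (1 - p)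

open scoped Classical in
noncomputable def bernDigit (p : ℝ) (x : ℝ) : Bool := if x < p then true else false

/-- The sequence of skewed binary digits of `x`; under the uniform distribution on
`[0,1)` this is an i.i.d. Bernoulli(p) sequence. -/
noncomputable def bernDigits (p : ℝ) (x : ℝ) : ℕ → Bool :=
  fun n => bernDigit p ((bernShift p)^[n] x)

/-- The i.i.d. Bernoulli(p) product probability measure on `ι → Bool`, for a countable
index type `ι`: the law of the family of skewed binary digits (indexed through an
injection `ι ↪ ℕ`) of a uniform random variable on `[0,1)`. Each coordinate is `true`
with probability `p` (with the convention that `p` is clamped to `[0,1]`). -/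
noncomputable def iidBool (ι : Type*) [Countable ι] (p : ℝ) : Measure (ι → Bool) :=
  Measure.map (fun f (i : ι) => f ((Countable.exists_injective_nat ι).choose i))
    (Measure.map (bernDigits p) (volume.restrict (Set.Ico (0 : ℝ) 1)))

/-- The law `ℙ_{p,λ,d}` of the independent alignment percolation model: sites are
occupied independently with probability `p`, and independently every potential
segment carries an independent Bernoulli(λ) label. -/
noncomputable def alignMeasure (d : ℕ) (p lam : ℝ) : Measure (Cfg d) :=
  (iidBool (Site d) p).prod (iidBool (Site d × Site d) lam)

/-- `(v, w)` is a feasible pair of the site configuration `ω` (ordered so that the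
coordinate where they differ increases): `v` and `w` differ in exactly one
coordinate, are both occupied, and no site strictly between them is occupied. -/
def FeasiblePair {d : ℕ} (ω : SiteCfg d) (v w : Site d) : Prop :=
  ∃ i : Fin d, (∀ j, j ≠ i → v j = w j) ∧ v i < w i ∧
    ω v = true ∧ ω w = true ∧ ∀ c : ℤ, v i < c → c < w i → ω (seg v i c) = false

/-- The edge `e` lies on the axis-parallel segment with endpoints `v` and `w`. -/
def EdgeOnSeg {d : ℕ} (e : EdgeIdx d) (v w : Site d) : Prop :=
  ∃ a b : ℤ, a ≤ e.1 e.2 ∧ e.1 e.2 < b ∧ v = seg e.1 e.2 a ∧ w = seg e.1 e.2 b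

/-- The edge `e` is open in the configuration `ξ`: it lies on the segment of a
feasible pair whose label is open. -/
def EdgeOpen {d : ℕ} (ξ : Cfg d) (e : EdgeIdx d) : Prop :=
  ∃ v w : Site d, FeasiblePair ξ.1 v w ∧ EdgeOnSeg e v w ∧ ξ.2 (v, w) = true

/-- The induced edge configuration `σ ∈ {0,1}^{E^d}` (as a `Bool`). -/
noncomputable def edgeState {d : ℕ} (ξ : Cfg d) (e : EdgeIdx d) : Bool :=
  @decide (EdgeOpen ξ e) (Classical.propDecidable _)

/-- The graph on `ℤ^d` whose edges are the open edges of the configuration `ξ`. -/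
def openGraph {d : ℕ} (ξ : Cfg d) : SimpleGraph (Site d) where
  Adj u v := ∃ i, (v = up u i ∧ EdgeOpen ξ (u, i)) ∨ (u = up v i ∧ EdgeOpen ξ (v, i))
  symm := by constructor; rintro u v ⟨i, h | h⟩; exacts [⟨i, Or.inr h⟩, ⟨i, Or.inl h⟩]
  loopless := by
    constructor
    rintro u ⟨i, ⟨h, -⟩ | ⟨h, -⟩⟩ <;>
    · have := congrFun h i
      simp [up, seg] at this

/-- The site `v` lies in an infinite connected component of open edges. -/
def PercolatesFrom {d : ℕ} (ξ : Cfg d) (v : Site d) : Prop :=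
  {w | (openGraph ξ).Reachable v w}.Infinite

/-- The set `𝒪` of open edges percolates. -/
def Percolates {d : ℕ} (ξ : Cfg d) : Prop := ∃ v, PercolatesFrom ξ v

/-- `θ(p,λ,d)`: the probability that the origin lies in an infinite open cluster. -/
noncomputable def theta (d : ℕ) (p lam : ℝ) : ℝ≥0∞ :=
  alignMeasure d p lam {ξ | PercolatesFrom ξ 0}

/-- `ℙ_{p,λ,d}(𝒪 percolates)`. -/
noncomputable def percProb (d : ℕ) (p lam : ℝ) : ℝ≥0∞ :=
  alignMeasure d p lam {ξ | Percolates ξ}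

/-- The critical segment parameter `λ_c(p,d) = sup {λ ≥ 0 : θ(p,λ,d) = 0}`. -/
noncomputable def lambdaC (d : ℕ) (p : ℝ) : ℝ :=
  sSup {lam : ℝ | 0 ≤ lam ∧ theta d p lam = 0}

/-- A configuration of Bernoulli bond percolation on `ℤ^d`. -/
abbrev BondCfg (d : ℕ) := EdgeIdx d → Bool

/-- Independent Bernoulli(λ) bond percolation on `ℤ^d`. -/
noncomputable def bondMeasure (d : ℕ) (lam : ℝ) : Measure (BondCfg d) :=
  iidBool (EdgeIdx d) lam

/-- The graph of open bonds of a bond configuration. -/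
def bondGraph {d : ℕ} (σ : BondCfg d) : SimpleGraph (Site d) where
  Adj u v := ∃ i, (v = up u i ∧ σ (u, i) = true) ∨ (u = up v i ∧ σ (v, i) = true)
  symm := by constructor; rintro u v ⟨i, h | h⟩; exacts [⟨i, Or.inr h⟩, ⟨i, Or.inl h⟩]
  loopless := by
    constructor
    rintro u ⟨i, ⟨h, -⟩ | ⟨h, -⟩⟩ <;>
    · have := congrFun h i
      simp [up, seg] at this

/-- The percolation function of Bernoulli bond percolation on `ℤ^d`. -/
noncomputable def thetaBond (d : ℕ) (lam : ℝ) : ℝ≥0∞ :=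
  bondMeasure d lam {σ | {w | (bondGraph σ).Reachable 0 w}.Infinite}

/-- The critical parameter `p_c^bond(d)` of Bernoulli bond percolation on `ℤ^d`. -/
noncomputable def pcBond (d : ℕ) : ℝ :=
  sSup {lam : ℝ | 0 ≤ lam ∧ thetaBond d lam = 0}

/-- The (closed) sup-norm box `B(x,L)` in `ℤ^d`. -/
def box (d : ℕ) (x : Site d) (L : ℝ) : Set (Site d) :=
  {z | ∀ i, |((z i - x i : ℤ) : ℝ)| ≤ L}

/-- The sphere `∂B(x,L) = {z : ‖z - x‖_∞ = ⌊L⌋}` in `ℤ^d`. -/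
def sphere (d : ℕ) (x : Site d) (L : ℝ) : Set (Site d) :=
  {z | (∀ i, |z i - x i| ≤ ⌊L⌋) ∧ ∃ i, |z i - x i| = ⌊L⌋}

/-- The sup-norm distance `‖x - y‖_∞` on `ℤ^d` (as a natural number). -/
def supDist {d : ℕ} (x y : Site d) : ℕ :=
  Finset.univ.sup fun i => (x i - y i).natAbs

/-- The sequence of scales: `L 0 = 10^4` and `L (k+1) = (L k)^(3/2)`. -/
noncomputable def Lscale : ℕ → ℝ
  | 0 => 10 ^ 4
  | k + 1 => Lscale k ^ ((3 : ℝ) / 2)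

/-- `α(p) = -log (1-p)`. -/
noncomputable def alphaP (p : ℝ) : ℝ := - Real.log (1 - p)

/-- The edge `e` has both endpoints in `B`. -/
def EdgeIn {d : ℕ} (B : Set (Site d)) (e : EdgeIdx d) : Prop :=
  e.1 ∈ B ∧ up e.1 e.2 ∈ B

/-- The event `A` is supported on the edges of `B`: it is measurable with respect to
the σ-algebra generated by the states of the edges with both endpoints in `B`. -/
def SupportedOnEdges {d : ℕ} (B : Set (Site d)) (A : Set (Cfg d)) : Prop :=
  MeasurableSet[MeasurableSpace.comap
    (fun ξ (e : {e : EdgeIdx d // EdgeIn B e}) => edgeState ξ e.1) inferInstance] A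

/-- `S` is a set of points of `T` whose `L`-boxes cover `T`. -/
def IsCover (d : ℕ) (T : Set (Site d)) (L : ℝ) (S : Finset (Site d)) : Prop :=
  ↑S ⊆ T ∧ T ⊆ ⋃ x ∈ S, box d x L

/-- `S` is a cover of `T` by `L`-boxes centred in `T`, of minimal cardinality. -/
def IsMinCover (d : ℕ) (T : Set (Site d)) (L : ℝ) (S : Finset (Site d)) : Prop :=
  IsCover d T L S ∧ ∀ S' : Finset (Site d), IsCover d T L S' → S.card ≤ S'.card


section Aux

noncomputable def wgt (p : ℝ) (t : Bool) : ℝ≥0∞ :=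
  if t then ENNReal.ofReal p else ENNReal.ofReal (1 - p)

lemma measurable_bernShift (p : ℝ) : Measurable (bernShift p) := by
  unfold bernShift
  exact Measurable.ite (measurableSet_lt measurable_id measurable_const)
    (measurable_id.div_const p) ((measurable_id.sub_const p).div_const (1-p))

lemma measurable_bernDigit (p : ℝ) : Measurable (bernDigit p) := by
  unfold bernDigit
  exact Measurable.ite (measurableSet_lt measurable_id measurable_const)
    measurable_const measurable_const

lemma measurable_bernDigits (p : ℝ) : Measurable (bernDigits p) := by
  apply measurable_pi_lambda
  intro n
  exact (measurable_bernDigit p).comp ((measurable_bernShift p).iterate n)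

lemma volume_div_preimage {p : ℝ} (hp : 0 < p) (A : Set ℝ) :
    volume ((fun x => x / p) ⁻¹' A) = ENNReal.ofReal p * volume A := by
  have : (fun x : ℝ => x / p) = (fun x : ℝ => p⁻¹ * x) := by
    funext x; rw [div_eq_inv_mul]
  rw [this, Real.volume_preimage_mul_left (inv_ne_zero hp.ne'), inv_inv,
    abs_of_pos hp]

lemma volume_affine_preimage {p : ℝ} (hp : p < 1) (A : Set ℝ) :
    volume ((fun x => (x - p) / (1 - p)) ⁻¹' A) = ENNReal.ofReal (1 - p) * volume A := by
  have h1 : (0:ℝ) < 1 - p := by linarith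
  have : (fun x : ℝ => (x - p) / (1 - p)) = (fun y : ℝ => (1-p)⁻¹ * y) ∘ (fun x : ℝ => -p + x) := by
    funext x; simp only [Function.comp_apply, div_eq_inv_mul]; ring_nf
  rw [this, Set.preimage_comp, measure_preimage_add,
    Real.volume_preimage_mul_left (inv_ne_zero h1.ne'), inv_inv, abs_of_pos h1]

lemma measurableSet_digitCyl (p : ℝ) (F : Finset ℕ) (b : ℕ → Bool) :
    MeasurableSet {x : ℝ | ∀ k ∈ F, bernDigits p x k = b k} := by
  have : {x : ℝ | ∀ k ∈ F, bernDigits p x k = b k} =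
      ⋂ k ∈ F, (fun x => bernDigits p x k) ⁻¹' {b k} := by
    ext x; simp
  rw [this]
  exact MeasurableSet.biInter F.countable_toSet fun k _ =>
    ((measurable_pi_apply k).comp (measurable_bernDigits p)) (measurableSet_singleton _)

lemma digit_shift (p : ℝ) (x : ℝ) (k : ℕ) :
    bernDigits p x (k+1) = bernDigits p (bernShift p x) k := by
  simp [bernDigits, Function.iterate_succ_apply]

lemma digits_cylinder {p : ℝ} (hp : 0 < p) (hp1 : p < 1) :
    ∀ (n : ℕ) (F : Finset ℕ), F ⊆ Finset.range n → ∀ b : ℕ → Bool,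
    volume ({x | ∀ k ∈ F, bernDigits p x k = b k} ∩ Set.Ico (0:ℝ) 1)
      = ∏ k ∈ F, wgt p (b k) := by
  intro n
  induction n with
  | zero =>
    intro F hF b
    have hFe : F = ∅ := Finset.subset_empty.mp (by simpa using hF)
    subst hFe
    simp [Real.volume_Ico]
  | succ n ih =>
    intro F hF b
    -- the shifted finset
    set F' : Finset ℕ := (F.erase 0).image (fun k => k - 1) with hF'
    have hF'sub : F' ⊆ Finset.range n := by
      intro j hj
      simp only [hF', Finset.mem_image, Finset.mem_erase] at hj
      obtain ⟨k, ⟨hk0, hkF⟩, rfl⟩ := hj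
      have := hF hkF
      simp only [Finset.mem_range] at this ⊢
      omega
    have hinj : Set.InjOn (fun k => k - 1) (F.erase 0 : Set ℕ) := by
      intro a ha b hb hab
      simp only [Finset.coe_erase, Set.mem_diff, Set.mem_singleton_iff] at ha hb
      simp only at hab
      omega
    -- membership in F characterization
    have hmemF : ∀ k, k ∈ F ↔ (k = 0 ∧ 0 ∈ F) ∨ (∃ j ∈ F', k = j + 1) := by
      intro k
      constructor
      · intro hk
        rcases Nat.eq_zero_or_pos k with rfl | hpos
        · exact Or.inl ⟨rfl, hk⟩
        · refine Or.inr ⟨k - 1, ?_, by omega⟩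
          simp only [hF', Finset.mem_image, Finset.mem_erase]
          exact ⟨k, ⟨by omega, hk⟩, rfl⟩
      · rintro (⟨rfl, h⟩ | ⟨j, hj, rfl⟩)
        · exact h
        · simp only [hF', Finset.mem_image, Finset.mem_erase] at hj
          obtain ⟨k, ⟨hk0, hkF⟩, rfl⟩ := hj
          have : k - 1 + 1 = k := by omega
          rwa [this]
    -- the set of y's for the IH
    set A : Set ℝ := {y | ∀ j ∈ F', bernDigits p y j = b (j+1)} ∩ Set.Ico (0:ℝ) 1 with hA
    have hAmeas : MeasurableSet A :=
      (measurableSet_digitCyl p F' (fun j => b (j+1))).inter measurableSet_Ico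
    have hIH : volume A = ∏ j ∈ F', wgt p (b (j+1)) := ih F' hF'sub _
    -- characterize pieces
    have hTrue : (fun x => x / p) ⁻¹' A =
        {x | (∀ j ∈ F', bernDigits p (bernShift p x) j = b (j+1))} ∩ Set.Ico (0:ℝ) 1 ∩ {x | x < p} := by
      ext x
      simp only [Set.mem_preimage, hA, Set.mem_inter_iff, Set.mem_setOf_eq, Set.mem_Ico]
      constructor
      · rintro ⟨hdig, h0, h1⟩
        have hx0 : 0 ≤ x := by
          by_contra h
          push_neg at h
          have : x / p < 0 := div_neg_of_neg_of_pos h hp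
          linarith
        have hxp : x < p := by
          by_contra h
          push_neg at h
          have : (1:ℝ) ≤ x / p := (one_le_div hp).mpr h
          linarith
        have hs : bernShift p x = x / p := by simp [bernShift, hxp]
        exact ⟨⟨fun j hj => by rw [hs]; exact hdig j hj, hx0, lt_trans hxp hp1⟩, hxp⟩
      · rintro ⟨⟨hdig, hx0, _⟩, hxp⟩
        have hs : bernShift p x = x / p := by simp [bernShift, hxp]
        refine ⟨fun j hj => by rw [← hs]; exact hdig j hj, div_nonneg hx0 hp.le,
          (div_lt_one hp).mpr hxp⟩
    have hFalse : (fun x => (x - p) / (1 - p)) ⁻¹' A =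
        {x | (∀ j ∈ F', bernDigits p (bernShift p x) j = b (j+1))} ∩ Set.Ico (0:ℝ) 1 ∩ {x | ¬ x < p} := by
      have h1p : (0:ℝ) < 1 - p := by linarith
      ext x
      simp only [Set.mem_preimage, hA, Set.mem_inter_iff, Set.mem_setOf_eq, Set.mem_Ico]
      constructor
      · rintro ⟨hdig, h0, h1⟩
        have hxp : p ≤ x := by
          by_contra h
          push_neg at h
          have : (x - p) / (1 - p) < 0 := div_neg_of_neg_of_pos (by linarith) h1p
          linarith
        have hx1 : x < 1 := by
          have := (div_lt_one h1p).mp h1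
          linarith
        have hs : bernShift p x = (x - p) / (1 - p) := by simp [bernShift, not_lt.mpr hxp]
        exact ⟨⟨fun j hj => by rw [hs]; exact hdig j hj, le_trans hp.le hxp, hx1⟩, not_lt.mpr hxp⟩
      · rintro ⟨⟨hdig, _, hx1⟩, hxp⟩
        push_neg at hxp
        have hs : bernShift p x = (x - p) / (1 - p) := by simp [bernShift, not_lt.mpr hxp]
        refine ⟨fun j hj => by rw [← hs]; exact hdig j hj,
          div_nonneg (by linarith) (by linarith), (div_lt_one h1p).mpr (by linarith)⟩
    have hSmem : ∀ x, (∀ k ∈ F, bernDigits p x k = b k) ↔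
        ((0 ∈ F → bernDigits p x 0 = b 0) ∧
          ∀ j ∈ F', bernDigits p (bernShift p x) j = b (j+1)) := by
      intro x
      constructor
      · intro h
        refine ⟨fun h0 => h 0 h0, fun j hj => ?_⟩
        have hj1 : j+1 ∈ F := (hmemF (j+1)).mpr (Or.inr ⟨j, hj, rfl⟩)
        rw [← digit_shift]
        exact h _ hj1
      · rintro ⟨h0, hs⟩ k hk
        rcases (hmemF k).mp hk with ⟨rfl, h0'⟩ | ⟨j, hj, rfl⟩
        · exact h0 h0'
        · rw [digit_shift]
          exact hs j hj
    have hd0 : ∀ x, bernDigits p x 0 = bernDigit p x := fun x => rfl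
    have hdt : ∀ x : ℝ, bernDigit p x = true ↔ x < p := by
      intro x; by_cases h : x < p <;> simp [bernDigit, h]
    have hdf : ∀ x : ℝ, bernDigit p x = false ↔ ¬ x < p := by
      intro x; by_cases h : x < p <;> simp [bernDigit, h]
    have hprodF' : ∏ j ∈ F', wgt p (b (j+1)) = ∏ k ∈ F.erase 0, wgt p (b k) := by
      rw [hF', Finset.prod_image (fun a ha c hc hac =>
        hinj (Finset.mem_coe.mpr ha) (Finset.mem_coe.mpr hc) hac)]
      refine Finset.prod_congr rfl fun k hk => ?_
      have hk0 : k ≠ 0 := (Finset.mem_erase.mp hk).1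
      have hkk : k - 1 + 1 = k := by omega
      rw [hkk]
    by_cases h0F : 0 ∈ F
    · cases hb0 : b 0 with
      | true =>
        have hSeq : {x | ∀ k ∈ F, bernDigits p x k = b k} ∩ Set.Ico (0:ℝ) 1
            = (fun x => x / p) ⁻¹' A := by
          rw [hTrue]
          ext x
          simp only [Set.mem_inter_iff, Set.mem_setOf_eq]
          constructor
          · rintro ⟨hall, hIco⟩
            obtain ⟨h0, hs⟩ := (hSmem x).mp hall
            have := h0 h0F
            rw [hd0, hb0, hdt] at this
            exact ⟨⟨hs, hIco⟩, this⟩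
          · rintro ⟨⟨hs, hIco⟩, hxp⟩
            refine ⟨(hSmem x).mpr ⟨fun _ => ?_, hs⟩, hIco⟩
            rw [hd0, hb0, hdt]
            exact hxp
        rw [hSeq, volume_div_preimage hp, hIH,
          ← Finset.mul_prod_erase F _ h0F, hb0, ← hprodF']
        rfl
      | false =>
        have hSeq : {x | ∀ k ∈ F, bernDigits p x k = b k} ∩ Set.Ico (0:ℝ) 1
            = (fun x => (x - p) / (1 - p)) ⁻¹' A := by
          rw [hFalse]
          ext x
          simp only [Set.mem_inter_iff, Set.mem_setOf_eq]
          constructor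
          · rintro ⟨hall, hIco⟩
            obtain ⟨h0, hs⟩ := (hSmem x).mp hall
            have := h0 h0F
            rw [hd0, hb0, hdf] at this
            exact ⟨⟨hs, hIco⟩, this⟩
          · rintro ⟨⟨hs, hIco⟩, hxp⟩
            refine ⟨(hSmem x).mpr ⟨fun _ => ?_, hs⟩, hIco⟩
            rw [hd0, hb0, hdf]
            exact hxp
        rw [hSeq, volume_affine_preimage hp1, hIH,
          ← Finset.mul_prod_erase F _ h0F, hb0, ← hprodF']
        rfl
    · have hSeq : {x | ∀ k ∈ F, bernDigits p x k = b k} ∩ Set.Ico (0:ℝ) 1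
          = ((fun x => x / p) ⁻¹' A) ∪ ((fun x => (x - p) / (1 - p)) ⁻¹' A) := by
        rw [hTrue, hFalse]
        ext x
        simp only [Set.mem_union, Set.mem_inter_iff, Set.mem_setOf_eq]
        constructor
        · rintro ⟨hall, hIco⟩
          obtain ⟨-, hs⟩ := (hSmem x).mp hall
          by_cases hxp : x < p
          · exact Or.inl ⟨⟨hs, hIco⟩, hxp⟩
          · exact Or.inr ⟨⟨hs, hIco⟩, hxp⟩
        · rintro (⟨⟨hs, hIco⟩, -⟩ | ⟨⟨hs, hIco⟩, -⟩) <;>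
            exact ⟨(hSmem x).mpr ⟨fun h => absurd h h0F, hs⟩, hIco⟩
      have hdisj : Disjoint ((fun x : ℝ => x / p) ⁻¹' A)
          ((fun x : ℝ => (x - p) / (1 - p)) ⁻¹' A) := by
        rw [hTrue, hFalse]
        apply Set.disjoint_left.mpr
        rintro x ⟨-, hxp⟩ ⟨-, hxp'⟩
        exact hxp' hxp
      have hmeas2 : MeasurableSet ((fun x : ℝ => (x - p) / (1 - p)) ⁻¹' A) :=
        ((measurable_id.sub_const p).div_const (1-p)) hAmeas
      rw [hSeq, measure_union hdisj hmeas2, volume_div_preimage hp,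
        volume_affine_preimage hp1, hIH, ← add_mul,
        ← ENNReal.ofReal_add hp.le (by linarith : (0:ℝ) ≤ 1 - p)]
      have : p + (1 - p) = 1 := by ring
      rw [this, ENNReal.ofReal_one, one_mul, hprodF',
        Finset.erase_eq_of_notMem h0F]


lemma measurableSet_boolCyl {ι : Type*} (F : Finset ι) (b : ι → Bool) :
    MeasurableSet {f : ι → Bool | ∀ i ∈ F, f i = b i} := by
  have : {f : ι → Bool | ∀ i ∈ F, f i = b i} = ⋂ i ∈ F, (fun f => f i) ⁻¹' {b i} := by
    ext f; simp
  rw [this]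
  exact MeasurableSet.biInter F.countable_toSet fun i _ =>
    (measurable_pi_apply i) (measurableSet_singleton _)

lemma nu_cylinder {p : ℝ} (hp : 0 < p) (hp1 : p < 1) (F : Finset ℕ) (b : ℕ → Bool) :
    Measure.map (bernDigits p) (volume.restrict (Set.Ico (0:ℝ) 1)) {f | ∀ k ∈ F, f k = b k}
      = ∏ k ∈ F, wgt p (b k) := by
  obtain ⟨n, hn⟩ := F.exists_nat_subset_range
  rw [Measure.map_apply (measurable_bernDigits p) (measurableSet_boolCyl F b),
    Measure.restrict_apply (measurable_bernDigits p (measurableSet_boolCyl F b))]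
  exact digits_cylinder hp hp1 n F hn b

lemma iidBool_cylinder {ι : Type*} [Countable ι] [Nonempty ι] {p : ℝ}
    (hp : 0 < p) (hp1 : p < 1) (F : Finset ι) (b : ι → Bool) :
    iidBool ι p {f | ∀ i ∈ F, f i = b i} = ∏ i ∈ F, wgt p (b i) := by
  set e : ι → ℕ := (Countable.exists_injective_nat ι).choose with he
  have hinj : Function.Injective e := (Countable.exists_injective_nat ι).choose_spec
  set einv : ℕ → ι := Function.invFun e with heinv
  have hleft : ∀ i, einv (e i) = i := fun i => Function.leftInverse_invFun hinj i
  have hmeas : Measurable (fun (f : ℕ → Bool) (i : ι) => f (e i)) :=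
    measurable_pi_lambda _ fun i => measurable_pi_apply (e i)
  rw [iidBool, Measure.map_apply hmeas (measurableSet_boolCyl F b)]
  have hpre : (fun (f : ℕ → Bool) (i : ι) => f (e i)) ⁻¹' {f | ∀ i ∈ F, f i = b i}
      = {f : ℕ → Bool | ∀ m ∈ F.image e, f m = (b ∘ einv) m} := by
    ext f
    simp only [Set.mem_preimage, Set.mem_setOf_eq]
    constructor
    · intro h m hm
      obtain ⟨i, hi, rfl⟩ := Finset.mem_image.mp hm
      rw [Function.comp_apply, hleft]
      exact h i hi
    · intro h i hi
      have := h (e i) (Finset.mem_image_of_mem e hi)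
      rwa [Function.comp_apply, hleft] at this
  rw [hpre, nu_cylinder hp hp1,
    Finset.prod_image (fun a _ c _ hac => hinj hac)]
  exact Finset.prod_congr rfl fun i _ => by rw [Function.comp_apply, hleft]

lemma iidBool_isProb (ι : Type*) [Countable ι] (p : ℝ) :
    IsProbabilityMeasure (iidBool ι p) := by
  constructor
  have hmeas : Measurable (fun (f : ℕ → Bool) (i : ι) =>
      f ((Countable.exists_injective_nat ι).choose i)) :=
    measurable_pi_lambda _ fun i => measurable_pi_apply _
  rw [iidBool, Measure.map_apply hmeas MeasurableSet.univ, Set.preimage_univ,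
    Measure.map_apply (measurable_bernDigits p) MeasurableSet.univ, Set.preimage_univ,
    Measure.restrict_apply MeasurableSet.univ, Set.univ_inter, Real.volume_Ico]
  norm_num

section Geom

variable {d : ℕ}

lemma seg_seg (u : Site d) (i : Fin d) (a c : ℤ) : seg (seg u i a) i c = seg u i c := by
  simp only [seg, Function.update_idem]

lemma seg_same (u : Site d) (i : Fin d) (a : ℤ) : seg u i a i = a := by
  simp only [seg, Function.update_self]

lemma seg_other {i j : Fin d} (hne : j ≠ i) (u : Site d) (a : ℤ) : seg u i a j = u j := by
  simp only [seg, Function.update_of_ne hne]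

lemma seg_zero_zero (i : Fin d) : seg (0 : Site d) i 0 = 0 := by
  have h : (0 : Site d) i = 0 := rfl
  rw [seg, ← h, Function.update_eq_self]

lemma edgeOpen_iff {ω : SiteCfg d} {ζ : PairLabels d} {i : Fin d} {m a₀ b₀ : ℤ}
    (ha : ω (seg 0 i a₀) = true) (hb : ω (seg 0 i b₀) = true)
    (ham : a₀ ≤ m) (hmb : m < b₀)
    (hgap : ∀ c : ℤ, a₀ < c → c < b₀ → ω (seg 0 i c) = false) :
    EdgeOpen (ω, ζ) (seg (0 : Site d) i m, i) ↔ ζ (seg 0 i a₀, seg 0 i b₀) = true := by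
  constructor
  · rintro ⟨v, w, ⟨i', hcoord, hlt, hv, hw, hgap'⟩, ⟨a, b, hma, hmb', hva, hwb⟩, hζ⟩
    simp only [seg_same, seg_seg] at hma hmb' hva hwb
    subst hva; subst hwb
    dsimp only at hv hw hζ
    have hii : i' = i := by
      by_contra hne
      rw [seg_other hne, seg_other hne] at hlt
      exact lt_irrefl _ hlt
    subst hii
    simp only [seg_same, seg_seg] at hlt hgap'
    have haa : a = a₀ := by
      by_contra hne
      rcases lt_or_gt_of_ne hne with h | h
      · have hfa := hgap' a₀ h (by omega)
        rw [hfa] at ha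
        simp at ha
      · have hfa := hgap a h (by omega)
        rw [hfa] at hv
        simp at hv
    have hbb : b = b₀ := by
      by_contra hne
      rcases lt_or_gt_of_ne hne with h | h
      · have hfb := hgap b (by omega) h
        rw [hfb] at hw
        simp at hw
      · have hfb := hgap' b₀ (by omega) h
        rw [hfb] at hb
        simp at hb
    subst haa; subst hbb
    exact hζ
  · intro hζ
    refine ⟨seg 0 i a₀, seg 0 i b₀, ⟨i, ?_, ?_, ha, hb, ?_⟩, ⟨a₀, b₀, ?_, ?_, ?_, ?_⟩, hζ⟩
    · intro j hj
      rw [seg_other hj, seg_other hj]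
    · rw [seg_same, seg_same]; omega
    · intro c hc1 hc2
      rw [seg_same] at hc1 hc2
      rw [seg_seg]
      exact hgap c hc1 hc2
    · show a₀ ≤ seg 0 i m i
      rw [seg_same]; exact ham
    · show seg (0 : Site d) i m i < b₀
      rw [seg_same]; exact hmb
    · show seg 0 i a₀ = seg (seg 0 i m) i a₀
      rw [seg_seg]
    · show seg 0 i b₀ = seg (seg 0 i m) i b₀
      rw [seg_seg]

end Geom

section Cells

variable {d : ℕ}

/-- `a` is the nearest occupied site strictly left of the origin on axis `i`. -/
def NL (ω : SiteCfg d) (i : Fin d) (a : ℤ) : Prop :=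
  a < 0 ∧ ω (seg 0 i a) = true ∧ ∀ c : ℤ, a < c → c < 0 → ω (seg 0 i c) = false

/-- `b` is the nearest occupied site strictly right of the origin on axis `i`. -/
def NR (ω : SiteCfg d) (i : Fin d) (b : ℤ) : Prop :=
  0 < b ∧ ω (seg 0 i b) = true ∧ ∀ c : ℤ, 0 < c → c < b → ω (seg 0 i c) = false

lemma NL_unique {ω : SiteCfg d} {i : Fin d} {a a' : ℤ} (h : NL ω i a) (h' : NL ω i a') :
    a = a' := by
  by_contra hne
  rcases lt_or_gt_of_ne hne with hlt | hlt
  · have hf := h.2.2 a' hlt h'.1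
    have := h'.2.1
    rw [hf] at this
    simp at this
  · have hf := h'.2.2 a hlt h.1
    have := h.2.1
    rw [hf] at this
    simp at this

lemma NR_unique {ω : SiteCfg d} {i : Fin d} {b b' : ℤ} (h : NR ω i b) (h' : NR ω i b') :
    b = b' := by
  by_contra hne
  rcases lt_or_gt_of_ne hne with hlt | hlt
  · have hf := h'.2.2 b h.1 hlt
    have := h.2.1
    rw [hf] at this
    simp at this
  · have hf := h.2.2 b' h'.1 hlt
    have := h'.2.1
    rw [hf] at this
    simp at this

lemma NR_exists {ω : SiteCfg d} {i : Fin d}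
    (h : ¬ ∀ k : ℕ, ω (seg 0 i ((k : ℤ) + 1)) = false) : ∃ b, NR ω i b := by
  push_neg at h
  have hex : ∃ k : ℕ, ω (seg 0 i ((k : ℤ) + 1)) = true := by
    obtain ⟨k, hk⟩ := h
    cases hb : ω (seg 0 i ((k : ℤ) + 1)) with
    | false => exact absurd hb hk
    | true => exact ⟨k, hb⟩
  classical
  refine ⟨(Nat.find hex : ℤ) + 1, by positivity, Nat.find_spec hex, ?_⟩
  intro c hc1 hc2
  have hj : ∃ j : ℕ, (j : ℤ) + 1 = c ∧ j < Nat.find hex := by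
    refine ⟨(c - 1).toNat, by omega, ?_⟩
    omega
  obtain ⟨j, hjc, hjlt⟩ := hj
  have := Nat.find_min hex hjlt
  rw [hjc] at this
  cases hb : ω (seg 0 i c) with
  | false => rfl
  | true => exact absurd hb this

lemma NL_exists {ω : SiteCfg d} {i : Fin d}
    (h : ¬ ∀ k : ℕ, ω (seg 0 i (-(k : ℤ) - 1)) = false) : ∃ a, NL ω i a := by
  push_neg at h
  have hex : ∃ k : ℕ, ω (seg 0 i (-(k : ℤ) - 1)) = true := by
    obtain ⟨k, hk⟩ := h
    cases hb : ω (seg 0 i (-(k : ℤ) - 1)) with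
    | false => exact absurd hb hk
    | true => exact ⟨k, hb⟩
  classical
  refine ⟨-(Nat.find hex : ℤ) - 1, by omega, Nat.find_spec hex, ?_⟩
  intro c hc1 hc2
  have hj : ∃ j : ℕ, -(j : ℤ) - 1 = c ∧ j < Nat.find hex := by
    refine ⟨(-c - 1).toNat, by omega, ?_⟩
    omega
  obtain ⟨j, hjc, hjlt⟩ := hj
  have := Nat.find_min hex hjlt
  rw [hjc] at this
  cases hb : ω (seg 0 i c) with
  | false => rfl
  | true => exact absurd hb this

/-- Cells of the partition: origin state `t` and the four nearest occupied sites. -/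
def Cell (i1 i2 : Fin d) (t : Bool) (z : ℤ × ℤ × ℤ × ℤ) : Set (SiteCfg d) :=
  {ω | ω 0 = t ∧ NL ω i1 z.1 ∧ NR ω i1 z.2.1 ∧ NL ω i2 z.2.2.1 ∧ NR ω i2 z.2.2.2}

lemma measurableSet_evalCyl (x : Site d) (t : Bool) :
    MeasurableSet {ω : SiteCfg d | ω x = t} := by
  have : {ω : SiteCfg d | ω x = t} = (fun ω : SiteCfg d => ω x) ⁻¹' {t} := rfl
  rw [this]
  exact (measurable_pi_apply x) (measurableSet_singleton t)

lemma measurableSet_NL (i : Fin d) (a : ℤ) : MeasurableSet {ω : SiteCfg d | NL ω i a} := by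
  have hset : {ω : SiteCfg d | NL ω i a} =
      ({ω : SiteCfg d | a < 0} ∩ {ω | ω (seg 0 i a) = true}) ∩
        ⋂ c : ℤ, {ω : SiteCfg d | a < c → c < 0 → ω (seg 0 i c) = false} := by
    ext ω
    simp only [NL, Set.mem_inter_iff, Set.mem_iInter, Set.mem_setOf_eq]
    tauto
  rw [hset]
  refine (MeasurableSet.inter ?_ (measurableSet_evalCyl _ _)).inter
    (MeasurableSet.iInter fun c => ?_)
  · by_cases h : a < 0 <;> simp [h]
  · by_cases h1 : a < c
    · by_cases h2 : c < 0
      · simp only [h1, h2, forall_true_left]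
        exact measurableSet_evalCyl _ _
      · simp [h2]
    · simp [h1]

lemma measurableSet_NR (i : Fin d) (b : ℤ) : MeasurableSet {ω : SiteCfg d | NR ω i b} := by
  have hset : {ω : SiteCfg d | NR ω i b} =
      ({ω : SiteCfg d | 0 < b} ∩ {ω | ω (seg 0 i b) = true}) ∩
        ⋂ c : ℤ, {ω : SiteCfg d | 0 < c → c < b → ω (seg 0 i c) = false} := by
    ext ω
    simp only [NR, Set.mem_inter_iff, Set.mem_iInter, Set.mem_setOf_eq]
    tauto
  rw [hset]
  refine (MeasurableSet.inter ?_ (measurableSet_evalCyl _ _)).inter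
    (MeasurableSet.iInter fun c => ?_)
  · by_cases h : 0 < b <;> simp [h]
  · by_cases h1 : 0 < c
    · by_cases h2 : c < b
      · simp only [h1, h2, forall_true_left]
        exact measurableSet_evalCyl _ _
      · simp [h2]
    · simp [h1]

lemma measurableSet_Cell (i1 i2 : Fin d) (t : Bool) (z : ℤ × ℤ × ℤ × ℤ) :
    MeasurableSet (Cell i1 i2 t z) := by
  have : Cell i1 i2 t z = {ω : SiteCfg d | ω 0 = t} ∩ ({ω | NL ω i1 z.1} ∩
      ({ω | NR ω i1 z.2.1} ∩ ({ω | NL ω i2 z.2.2.1} ∩ {ω | NR ω i2 z.2.2.2}))) := by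
    ext ω
    simp only [Cell, Set.mem_inter_iff, Set.mem_setOf_eq]
  rw [this]
  exact (measurableSet_evalCyl _ _).inter ((measurableSet_NL _ _).inter
    ((measurableSet_NR _ _).inter ((measurableSet_NL _ _).inter (measurableSet_NR _ _))))

lemma Cell_disjoint (i1 i2 : Fin d) (t t' : Bool) (z z' : ℤ × ℤ × ℤ × ℤ)
    (h : t ≠ t' ∨ z ≠ z') : Disjoint (Cell i1 i2 t z) (Cell i1 i2 t' z') := by
  rw [Set.disjoint_left]
  rintro ω ⟨h0, hl1, hr1, hl2, hr2⟩ ⟨h0', hl1', hr1', hl2', hr2'⟩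
  rcases h with h | h
  · exact h (h0 ▸ h0' ▸ rfl)
  · apply h
    obtain ⟨z1, z2, z3, z4⟩ := z
    obtain ⟨z1', z2', z3', z4'⟩ := z'
    simp only [Prod.mk.injEq]
    exact ⟨NL_unique hl1 hl1', NR_unique hr1 hr1', NL_unique hl2 hl2', NR_unique hr2 hr2'⟩

/-- The good event: all four nearest occupied sites exist. -/
def Good (i1 i2 : Fin d) : Set (SiteCfg d) :=
  {ω | (∃ a, NL ω i1 a) ∧ (∃ b, NR ω i1 b) ∧ (∃ a, NL ω i2 a) ∧ (∃ b, NR ω i2 b)}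

lemma cell_union (i1 i2 : Fin d) (t : Bool) :
    {ω : SiteCfg d | ω 0 = t} ∩ Good i1 i2 = ⋃ z : ℤ × ℤ × ℤ × ℤ, Cell i1 i2 t z := by
  ext ω
  simp only [Set.mem_inter_iff, Set.mem_setOf_eq, Set.mem_iUnion, Good]
  constructor
  · rintro ⟨h0, ⟨a1, ha1⟩, ⟨b1, hb1⟩, ⟨a2, ha2⟩, ⟨b2, hb2⟩⟩
    exact ⟨(a1, b1, a2, b2), h0, ha1, hb1, ha2, hb2⟩
  · rintro ⟨⟨a1, b1, a2, b2⟩, h0, ha1, hb1, ha2, hb2⟩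
    exact ⟨h0, ⟨a1, ha1⟩, ⟨b1, hb1⟩, ⟨a2, ha2⟩, ⟨b2, hb2⟩⟩

end Cells

section Null

variable {d : ℕ}

lemma noNR_zero {p : ℝ} (hp : 0 < p) (hp1 : p < 1) (i : Fin d) :
    iidBool (Site d) p {ω : SiteCfg d | ¬ ∃ b, NR ω i b} = 0 := by
  have key : ∀ n : ℕ, iidBool (Site d) p {ω : SiteCfg d | ¬ ∃ b, NR ω i b}
      ≤ ENNReal.ofReal (1 - p) ^ n := by
    intro n
    set F : Finset (Site d) :=
      (Finset.range n).image (fun k : ℕ => seg (0 : Site d) i ((k : ℤ) + 1)) with hF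
    have hcard : F.card = n := by
      rw [hF, Finset.card_image_of_injOn, Finset.card_range]
      intro a _ c _ hac
      have h := congrArg (fun u : Site d => u i) hac
      simp only [seg_same] at h
      omega
    have hcyl := iidBool_cylinder (p := p) hp hp1 F (fun _ => false)
    have hsub : {ω : SiteCfg d | ¬ ∃ b, NR ω i b} ⊆
        {f : SiteCfg d | ∀ x ∈ F, f x = (fun _ : Site d => false) x} := by
      intro ω hω
      have hall : ∀ k : ℕ, ω (seg 0 i ((k : ℤ) + 1)) = false := by
        by_contra hc
        exact hω (NR_exists hc)
      intro x hx
      obtain ⟨k, -, rfl⟩ := Finset.mem_image.mp hx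
      exact hall k
    calc iidBool (Site d) p {ω : SiteCfg d | ¬ ∃ b, NR ω i b}
        ≤ iidBool (Site d) p {f : SiteCfg d | ∀ x ∈ F, f x = (fun _ : Site d => false) x} :=
          measure_mono hsub
      _ = ∏ _x ∈ F, wgt p false := hcyl
      _ = ENNReal.ofReal (1 - p) ^ n := by rw [Finset.prod_const, hcard]; rfl
  have hto : Filter.Tendsto (fun n : ℕ => ENNReal.ofReal (1 - p) ^ n) Filter.atTop (nhds 0) :=
    ENNReal.tendsto_pow_atTop_nhds_zero_of_lt_one (ENNReal.ofReal_lt_one.mpr (by linarith))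
  exact le_zero_iff.mp (ge_of_tendsto' hto key)

lemma noNL_zero {p : ℝ} (hp : 0 < p) (hp1 : p < 1) (i : Fin d) :
    iidBool (Site d) p {ω : SiteCfg d | ¬ ∃ a, NL ω i a} = 0 := by
  have key : ∀ n : ℕ, iidBool (Site d) p {ω : SiteCfg d | ¬ ∃ a, NL ω i a}
      ≤ ENNReal.ofReal (1 - p) ^ n := by
    intro n
    set F : Finset (Site d) :=
      (Finset.range n).image (fun k : ℕ => seg (0 : Site d) i (-(k : ℤ) - 1)) with hF
    have hcard : F.card = n := by
      rw [hF, Finset.card_image_of_injOn, Finset.card_range]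
      intro a _ c _ hac
      have h := congrArg (fun u : Site d => u i) hac
      simp only [seg_same] at h
      omega
    have hcyl := iidBool_cylinder (p := p) hp hp1 F (fun _ => false)
    have hsub : {ω : SiteCfg d | ¬ ∃ a, NL ω i a} ⊆
        {f : SiteCfg d | ∀ x ∈ F, f x = (fun _ : Site d => false) x} := by
      intro ω hω
      have hall : ∀ k : ℕ, ω (seg 0 i (-(k : ℤ) - 1)) = false := by
        by_contra hc
        exact hω (NL_exists hc)
      intro x hx
      obtain ⟨k, -, rfl⟩ := Finset.mem_image.mp hx
      exact hall k
    calc iidBool (Site d) p {ω : SiteCfg d | ¬ ∃ a, NL ω i a}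
        ≤ iidBool (Site d) p {f : SiteCfg d | ∀ x ∈ F, f x = (fun _ : Site d => false) x} :=
          measure_mono hsub
      _ = ∏ _x ∈ F, wgt p false := hcyl
      _ = ENNReal.ofReal (1 - p) ^ n := by rw [Finset.prod_const, hcard]; rfl
  have hto : Filter.Tendsto (fun n : ℕ => ENNReal.ofReal (1 - p) ^ n) Filter.atTop (nhds 0) :=
    ENNReal.tendsto_pow_atTop_nhds_zero_of_lt_one (ENNReal.ofReal_lt_one.mpr (by linarith))
  exact le_zero_iff.mp (ge_of_tendsto' hto key)

lemma good_compl_zero {p : ℝ} (hp : 0 < p) (hp1 : p < 1) (i1 i2 : Fin d) :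
    iidBool (Site d) p (Good i1 i2)ᶜ = 0 := by
  have hsub : (Good i1 i2)ᶜ ⊆
      ({ω : SiteCfg d | ¬ ∃ a, NL ω i1 a} ∪ {ω | ¬ ∃ b, NR ω i1 b}) ∪
      ({ω : SiteCfg d | ¬ ∃ a, NL ω i2 a} ∪ {ω | ¬ ∃ b, NR ω i2 b}) := by
    intro ω hω
    simp only [Good, Set.mem_compl_iff, Set.mem_setOf_eq, not_and_or] at hω
    simp only [Set.mem_union, Set.mem_setOf_eq]
    tauto
  refine le_zero_iff.mp (le_trans (measure_mono hsub) ?_)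
  refine le_trans (measure_union_le _ _) ?_
  have h1 : iidBool (Site d) p ({ω : SiteCfg d | ¬ ∃ a, NL ω i1 a} ∪ {ω | ¬ ∃ b, NR ω i1 b}) = 0 :=
    le_zero_iff.mp (le_trans (measure_union_le _ _)
      (by rw [noNL_zero hp hp1, noNR_zero hp hp1, add_zero]))
  have h2 : iidBool (Site d) p ({ω : SiteCfg d | ¬ ∃ a, NL ω i2 a} ∪ {ω | ¬ ∃ b, NR ω i2 b}) = 0 :=
    le_zero_iff.mp (le_trans (measure_union_le _ _)
      (by rw [noNL_zero hp hp1, noNR_zero hp hp1, add_zero]))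
  rw [h1, h2, add_zero]

end Null

section Labels

lemma measurableSet_evalCylGen {α : Type*} (x : α) (t : Bool) :
    MeasurableSet {f : α → Bool | f x = t} := by
  have : {f : α → Bool | f x = t} = (fun f : α → Bool => f x) ⁻¹' {t} := rfl
  rw [this]
  exact (measurable_pi_apply x) (measurableSet_singleton t)

lemma iid_one {ι : Type*} [Countable ι] [Nonempty ι] {lam : ℝ} (hl : 0 < lam) (hl1 : lam < 1)
    (q : ι) (B : Bool) : iidBool ι lam {ζ : ι → Bool | ζ q = B} = wgt lam B := by
  classical
  have hset : {ζ : ι → Bool | ζ q = B}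
      = {f : ι → Bool | ∀ i ∈ ({q} : Finset ι), f i = (fun _ => B) i} := by
    ext ζ
    simp
  rw [hset, iidBool_cylinder hl hl1, Finset.prod_singleton]

lemma iid_two {ι : Type*} [Countable ι] [Nonempty ι] {lam : ℝ} (hl : 0 < lam) (hl1 : lam < 1)
    {q1 q2 : ι} (h12 : q1 ≠ q2) (B1 B2 : Bool) :
    iidBool ι lam {ζ : ι → Bool | ζ q1 = B1 ∧ ζ q2 = B2} = wgt lam B1 * wgt lam B2 := by
  classical
  set b : ι → Bool := fun q => if q = q1 then B1 else B2 with hb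
  have b1 : b q1 = B1 := by simp only [hb, if_pos rfl]
  have b2 : b q2 = B2 := by
    have hn : ¬ (q2 = q1) := fun h => h12 h.symm
    simp [hb, hn]
  have hset : {ζ : ι → Bool | ζ q1 = B1 ∧ ζ q2 = B2}
      = {f : ι → Bool | ∀ i ∈ ({q1, q2} : Finset ι), f i = b i} := by
    ext ζ
    simp only [Set.mem_setOf_eq, Finset.mem_insert, Finset.mem_singleton]
    constructor
    · rintro ⟨e1, e2⟩ i hi
      rcases hi with rfl | rfl
      · rw [b1]; exact e1
      · rw [b2]; exact e2
    · intro h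
      refine ⟨?_, ?_⟩
      · rw [← b1]; exact h q1 (Or.inl rfl)
      · rw [← b2]; exact h q2 (Or.inr rfl)
  rw [hset, iidBool_cylinder hl hl1,
    Finset.prod_insert (by simpa using h12), Finset.prod_singleton, b1, b2]

lemma iid_four {ι : Type*} [Countable ι] [Nonempty ι] {lam : ℝ} (hl : 0 < lam) (hl1 : lam < 1)
    {q1 q2 q3 q4 : ι} (h12 : q1 ≠ q2) (h13 : q1 ≠ q3) (h14 : q1 ≠ q4)
    (h23 : q2 ≠ q3) (h24 : q2 ≠ q4) (h34 : q3 ≠ q4) (B1 B2 B3 B4 : Bool) :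
    iidBool ι lam {ζ : ι → Bool | ζ q1 = B1 ∧ ζ q2 = B2 ∧ ζ q3 = B3 ∧ ζ q4 = B4}
      = wgt lam B1 * wgt lam B2 * wgt lam B3 * wgt lam B4 := by
  classical
  set b : ι → Bool := fun q =>
    if q = q1 then B1 else if q = q2 then B2 else if q = q3 then B3 else B4 with hb
  have b1 : b q1 = B1 := by simp only [hb, if_pos rfl]
  have b2 : b q2 = B2 := by
    have hn : ¬ (q2 = q1) := fun h => h12 h.symm
    simp [hb, hn]
  have b3 : b q3 = B3 := by
    have hn1 : ¬ (q3 = q1) := fun h => h13 h.symm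
    have hn2 : ¬ (q3 = q2) := fun h => h23 h.symm
    simp [hb, hn1, hn2]
  have b4 : b q4 = B4 := by
    have hn1 : ¬ (q4 = q1) := fun h => h14 h.symm
    have hn2 : ¬ (q4 = q2) := fun h => h24 h.symm
    have hn3 : ¬ (q4 = q3) := fun h => h34 h.symm
    simp [hb, hn1, hn2, hn3]
  have hset : {ζ : ι → Bool | ζ q1 = B1 ∧ ζ q2 = B2 ∧ ζ q3 = B3 ∧ ζ q4 = B4}
      = {f : ι → Bool | ∀ i ∈ ({q1, q2, q3, q4} : Finset ι), f i = b i} := by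
    ext ζ
    simp only [Set.mem_setOf_eq, Finset.mem_insert, Finset.mem_singleton]
    constructor
    · rintro ⟨e1, e2, e3, e4⟩ i hi
      rcases hi with rfl | rfl | rfl | rfl
      · rw [b1]; exact e1
      · rw [b2]; exact e2
      · rw [b3]; exact e3
      · rw [b4]; exact e4
    · intro h
      exact ⟨by rw [← b1]; exact h q1 (by tauto),
        by rw [← b2]; exact h q2 (by tauto),
        by rw [← b3]; exact h q3 (by tauto),
        by rw [← b4]; exact h q4 (by tauto)⟩
  rw [hset, iidBool_cylinder hl hl1,
    Finset.prod_insert (by simp [h12, h13, h14]),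
    Finset.prod_insert (by simp [h23, h24]),
    Finset.prod_insert (by simp [h34]),
    Finset.prod_singleton, b1, b2, b3, b4]
  ring

end Labels

section EdgeState

variable {d : ℕ}

lemma edgeState_eq_iff {ξ : Cfg d} {e : EdgeIdx d} {x : Bool}
    (h : EdgeOpen ξ e ↔ x = true) (B : Bool) : edgeState ξ e = B ↔ x = B := by
  classical
  unfold edgeState
  cases B with
  | true =>
    rw [decide_eq_true_eq]
    exact h
  | false =>
    rw [decide_eq_false_iff_not, h]
    cases x <;> simp

lemma f_edge_occ {ω : SiteCfg d} {ζ : PairLabels d} {i : Fin d} {b : ℤ}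
    (h0 : ω 0 = true) (hb : NR ω i b) :
    EdgeOpen (ω, ζ) ((0 : Site d), i) ↔ ζ ((0 : Site d), seg 0 i b) = true := by
  have h := edgeOpen_iff (ω := ω) (ζ := ζ) (i := i) (m := 0) (a₀ := 0) (b₀ := b)
    (by rwa [seg_zero_zero]) hb.2.1 le_rfl hb.1 (fun c hc1 hc2 => hb.2.2 c hc1 hc2)
  rwa [seg_zero_zero] at h

lemma fm_edge_occ {ω : SiteCfg d} {ζ : PairLabels d} {i : Fin d} {a : ℤ}
    (h0 : ω 0 = true) (ha : NL ω i a) :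
    EdgeOpen (ω, ζ) (seg (0 : Site d) i (-1), i) ↔ ζ (seg 0 i a, (0 : Site d)) = true := by
  have h := edgeOpen_iff (ω := ω) (ζ := ζ) (i := i) (m := -1) (a₀ := a) (b₀ := 0)
    ha.2.1 (by rwa [seg_zero_zero]) (by have := ha.1; omega) (by norm_num)
    (fun c hc1 hc2 => ha.2.2 c hc1 hc2)
  rwa [seg_zero_zero] at h

lemma f_edge_vac {ω : SiteCfg d} {ζ : PairLabels d} {i : Fin d} {a b : ℤ}
    (h0 : ω 0 = false) (ha : NL ω i a) (hb : NR ω i b) :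
    EdgeOpen (ω, ζ) ((0 : Site d), i) ↔ ζ (seg 0 i a, seg 0 i b) = true := by
  have hgap : ∀ c : ℤ, a < c → c < b → ω (seg 0 i c) = false := by
    intro c hc1 hc2
    rcases lt_trichotomy c 0 with hc | hc | hc
    · exact ha.2.2 c hc1 hc
    · subst hc; rwa [seg_zero_zero]
    · exact hb.2.2 c hc hc2
  have h := edgeOpen_iff (ω := ω) (ζ := ζ) (i := i) (m := 0) (a₀ := a) (b₀ := b)
    ha.2.1 hb.2.1 ha.1.le hb.1 hgap
  rwa [seg_zero_zero] at h

lemma fm_edge_vac {ω : SiteCfg d} {ζ : PairLabels d} {i : Fin d} {a b : ℤ}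
    (h0 : ω 0 = false) (ha : NL ω i a) (hb : NR ω i b) :
    EdgeOpen (ω, ζ) (seg (0 : Site d) i (-1), i) ↔ ζ (seg 0 i a, seg 0 i b) = true := by
  have hgap : ∀ c : ℤ, a < c → c < b → ω (seg 0 i c) = false := by
    intro c hc1 hc2
    rcases lt_trichotomy c 0 with hc | hc | hc
    · exact ha.2.2 c hc1 hc
    · subst hc; rwa [seg_zero_zero]
    · exact hb.2.2 c hc hc2
  exact edgeOpen_iff (ω := ω) (ζ := ζ) (i := i) (m := -1) (a₀ := a) (b₀ := b)
    ha.2.1 hb.2.1 (by have := ha.1; omega) (by have := hb.1; omega) hgap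

end EdgeState

section LabSets

variable {d : ℕ}

lemma seg_ne_zero {i : Fin d} {a : ℤ} (ha : a ≠ 0) : seg (0 : Site d) i a ≠ 0 := by
  intro h
  have h' := congrFun h i
  rw [seg_same] at h'
  exact ha (by simpa using h')

lemma seg_ne_seg {i1 i2 : Fin d} (h12 : i1 ≠ i2) {a b : ℤ} (ha : a ≠ 0) :
    seg (0 : Site d) i1 a ≠ seg (0 : Site d) i2 b := by
  intro h
  have h' := congrFun h i1
  rw [seg_same, seg_other h12] at h'
  exact ha (by simpa using h')

lemma pne1 {x y x' y' : Site d} (hx : x ≠ x') : (x, y) ≠ (x', y') :=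
  fun h => hx (congrArg Prod.fst h)

lemma pne2 {x y x' y' : Site d} (hy : y ≠ y') : (x, y) ≠ (x', y') :=
  fun h => hy (congrArg Prod.snd h)

/-- The label-cylinder corresponding to an occupied origin. -/
def Lab1 (i1 i2 : Fin d) (B1 Bm1 B2 Bm2 : Bool) (z : ℤ × ℤ × ℤ × ℤ) :
    Set (PairLabels d) :=
  {ζ | ζ ((0 : Site d), seg 0 i1 z.2.1) = B1 ∧ ζ (seg 0 i1 z.1, (0 : Site d)) = Bm1 ∧
       ζ ((0 : Site d), seg 0 i2 z.2.2.2) = B2 ∧ ζ (seg 0 i2 z.2.2.1, (0 : Site d)) = Bm2}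

/-- The label-cylinder corresponding to a vacant origin. -/
def Lab0 (i1 i2 : Fin d) (B1 Bm1 B2 Bm2 : Bool) (z : ℤ × ℤ × ℤ × ℤ) :
    Set (PairLabels d) :=
  {ζ | (ζ (seg 0 i1 z.1, seg 0 i1 z.2.1) = B1 ∧ ζ (seg 0 i1 z.1, seg 0 i1 z.2.1) = Bm1) ∧
       (ζ (seg 0 i2 z.2.2.1, seg 0 i2 z.2.2.2) = B2 ∧
        ζ (seg 0 i2 z.2.2.1, seg 0 i2 z.2.2.2) = Bm2)}

lemma Lab1_meas (i1 i2 : Fin d) (B1 Bm1 B2 Bm2 : Bool) (z : ℤ × ℤ × ℤ × ℤ) :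
    MeasurableSet (Lab1 i1 i2 B1 Bm1 B2 Bm2 z) := by
  unfold Lab1
  rw [Set.setOf_and, Set.setOf_and, Set.setOf_and]
  exact (measurableSet_evalCylGen _ _).inter ((measurableSet_evalCylGen _ _).inter
    ((measurableSet_evalCylGen _ _).inter (measurableSet_evalCylGen _ _)))

lemma Lab0_meas (i1 i2 : Fin d) (B1 Bm1 B2 Bm2 : Bool) (z : ℤ × ℤ × ℤ × ℤ) :
    MeasurableSet (Lab0 i1 i2 B1 Bm1 B2 Bm2 z) := by
  unfold Lab0
  rw [Set.setOf_and, Set.setOf_and, Set.setOf_and]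
  exact ((measurableSet_evalCylGen _ _).inter (measurableSet_evalCylGen _ _)).inter
    ((measurableSet_evalCylGen _ _).inter (measurableSet_evalCylGen _ _))

lemma Lab1_val {lam : ℝ} (hl : 0 < lam) (hl1 : lam < 1) {i1 i2 : Fin d} (h12 : i1 ≠ i2)
    (B1 Bm1 B2 Bm2 : Bool) {z : ℤ × ℤ × ℤ × ℤ}
    (hz : z.1 < 0 ∧ 0 < z.2.1 ∧ z.2.2.1 < 0 ∧ 0 < z.2.2.2) :
    iidBool (Site d × Site d) lam (Lab1 i1 i2 B1 Bm1 B2 Bm2 z)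
      = wgt lam B1 * wgt lam Bm1 * wgt lam B2 * wgt lam Bm2 := by
  obtain ⟨h1, h2, h3, h4⟩ := hz
  unfold Lab1
  exact iid_four hl hl1
    (pne2 (seg_ne_zero (by omega)))
    (pne2 (seg_ne_seg h12 (by omega)))
    (pne1 (Ne.symm (seg_ne_zero (by omega))))
    (pne1 (seg_ne_zero (by omega)))
    (pne1 (seg_ne_seg h12 (by omega)))
    (pne1 (Ne.symm (seg_ne_zero (by omega))))
    B1 Bm1 B2 Bm2

lemma Lab0_val {lam : ℝ} (hl : 0 < lam) (hl1 : lam < 1) {i1 i2 : Fin d} (h12 : i1 ≠ i2)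
    (B1 Bm1 B2 Bm2 : Bool) {z : ℤ × ℤ × ℤ × ℤ}
    (hz : z.1 < 0 ∧ 0 < z.2.1 ∧ z.2.2.1 < 0 ∧ 0 < z.2.2.2) :
    iidBool (Site d × Site d) lam (Lab0 i1 i2 B1 Bm1 B2 Bm2 z)
      = (if B1 = Bm1 then wgt lam B1 else 0) * (if B2 = Bm2 then wgt lam B2 else 0) := by
  obtain ⟨h1, h2, h3, h4⟩ := hz
  by_cases hB : B1 = Bm1
  · by_cases hB' : B2 = Bm2
    · subst hB; subst hB'
      have hset : Lab0 i1 i2 B1 B1 B2 B2 z =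
          {ζ : PairLabels d | ζ (seg 0 i1 z.1, seg 0 i1 z.2.1) = B1 ∧
            ζ (seg 0 i2 z.2.2.1, seg 0 i2 z.2.2.2) = B2} := by
        unfold Lab0
        ext ζ
        simp only [Set.mem_setOf_eq]
        tauto
      rw [hset, iid_two hl hl1 (pne1 (seg_ne_seg h12 (by omega))) B1 B2, if_pos rfl,
        if_pos rfl]
    · have hset : Lab0 i1 i2 B1 Bm1 B2 Bm2 z = ∅ := by
        rw [Set.eq_empty_iff_forall_notMem]
        rintro ζ ⟨-, hx, hy⟩
        exact hB' (hx ▸ hy ▸ rfl)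
      rw [hset, measure_empty, if_neg hB', mul_zero]
  · have hset : Lab0 i1 i2 B1 Bm1 B2 Bm2 z = ∅ := by
      rw [Set.eq_empty_iff_forall_notMem]
      rintro ζ ⟨⟨hx, hy⟩, -⟩
      exact hB (hx ▸ hy ▸ rfl)
    rw [hset, measure_empty, if_neg hB, zero_mul]

end LabSets

lemma align_local_prob (d : ℕ) {p lam : ℝ}
    (hp : 0 < p) (hp1 : p < 1) (hl : 0 < lam) (hl1 : lam < 1)
    (i1 i2 : Fin d) (h12 : i1 ≠ i2) (B1 Bm1 B2 Bm2 : Bool) :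
    alignMeasure d p lam {ξ : Cfg d |
        edgeState ξ ((0 : Site d), i1) = B1 ∧
        edgeState ξ (seg (0 : Site d) i1 (-1), i1) = Bm1 ∧
        edgeState ξ ((0 : Site d), i2) = B2 ∧
        edgeState ξ (seg (0 : Site d) i2 (-1), i2) = Bm2}
      = ENNReal.ofReal p * (wgt lam B1 * wgt lam Bm1 * wgt lam B2 * wgt lam Bm2)
        + ENNReal.ofReal (1 - p) *
          ((if B1 = Bm1 then wgt lam B1 else 0) * (if B2 = Bm2 then wgt lam B2 else 0)) := by
  classical
  haveI hPS : IsProbabilityMeasure (iidBool (Site d) p) := iidBool_isProb _ p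
  haveI hPL : IsProbabilityMeasure (iidBool (Site d × Site d) lam) := iidBool_isProb _ lam
  set E : Set (Cfg d) := {ξ : Cfg d |
        edgeState ξ ((0 : Site d), i1) = B1 ∧
        edgeState ξ (seg (0 : Site d) i1 (-1), i1) = Bm1 ∧
        edgeState ξ ((0 : Site d), i2) = B2 ∧
        edgeState ξ (seg (0 : Site d) i2 (-1), i2) = Bm2} with hE
  -- section identities
  have hsec1 : ∀ z : ℤ × ℤ × ℤ × ℤ, ∀ ω ∈ Cell i1 i2 true z, ∀ ζ : PairLabels d,
      ((ω, ζ) ∈ E ↔ ζ ∈ Lab1 i1 i2 B1 Bm1 B2 Bm2 z) := by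
    rintro z ω ⟨h0, ha1, hb1, ha2, hb2⟩ ζ
    simp only [hE, Lab1, Set.mem_setOf_eq]
    rw [edgeState_eq_iff (f_edge_occ h0 hb1) B1,
      edgeState_eq_iff (fm_edge_occ h0 ha1) Bm1,
      edgeState_eq_iff (f_edge_occ h0 hb2) B2,
      edgeState_eq_iff (fm_edge_occ h0 ha2) Bm2]
  have hsec0 : ∀ z : ℤ × ℤ × ℤ × ℤ, ∀ ω ∈ Cell i1 i2 false z, ∀ ζ : PairLabels d,
      ((ω, ζ) ∈ E ↔ ζ ∈ Lab0 i1 i2 B1 Bm1 B2 Bm2 z) := by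
    rintro z ω ⟨h0, ha1, hb1, ha2, hb2⟩ ζ
    simp only [hE, Lab0, Set.mem_setOf_eq]
    rw [edgeState_eq_iff (f_edge_vac h0 ha1 hb1) B1,
      edgeState_eq_iff (fm_edge_vac h0 ha1 hb1) Bm1,
      edgeState_eq_iff (f_edge_vac h0 ha2 hb2) B2,
      edgeState_eq_iff (fm_edge_vac h0 ha2 hb2) Bm2]
    tauto
  -- decomposition of the event
  have hdecomp : E = ((⋃ z : ℤ × ℤ × ℤ × ℤ, Cell i1 i2 true z ×ˢ Lab1 i1 i2 B1 Bm1 B2 Bm2 z) ∪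
      (⋃ z : ℤ × ℤ × ℤ × ℤ, Cell i1 i2 false z ×ˢ Lab0 i1 i2 B1 Bm1 B2 Bm2 z)) ∪
      (E ∩ ((Good i1 i2)ᶜ ×ˢ (Set.univ : Set (PairLabels d)))) := by
    apply Set.Subset.antisymm
    · rintro ⟨ω, ζ⟩ hξ
      by_cases hg : ω ∈ Good i1 i2
      · obtain ⟨⟨a1, ha1⟩, ⟨b1, hb1⟩, ⟨a2, ha2⟩, ⟨b2, hb2⟩⟩ := hg
        cases h0 : ω 0 with
        | true =>
          refine Or.inl (Or.inl (Set.mem_iUnion.mpr ⟨(a1, b1, a2, b2), ?_, ?_⟩))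
          · exact ⟨h0, ha1, hb1, ha2, hb2⟩
          · exact (hsec1 _ ω ⟨h0, ha1, hb1, ha2, hb2⟩ ζ).mp hξ
        | false =>
          refine Or.inl (Or.inr (Set.mem_iUnion.mpr ⟨(a1, b1, a2, b2), ?_, ?_⟩))
          · exact ⟨h0, ha1, hb1, ha2, hb2⟩
          · exact (hsec0 _ ω ⟨h0, ha1, hb1, ha2, hb2⟩ ζ).mp hξ
      · exact Or.inr ⟨hξ, hg, trivial⟩
    · rintro ⟨ω, ζ⟩ ((h | h) | h)
      · obtain ⟨z, hmem⟩ := Set.mem_iUnion.mp h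
        exact (hsec1 z ω hmem.1 ζ).mpr hmem.2
      · obtain ⟨z, hmem⟩ := Set.mem_iUnion.mp h
        exact (hsec0 z ω hmem.1 ζ).mpr hmem.2
      · exact h.1
  have hAM : alignMeasure d p lam
      = (iidBool (Site d) p).prod (iidBool (Site d × Site d) lam) := rfl
  -- null part
  have hnull : alignMeasure d p lam
      (E ∩ ((Good i1 i2)ᶜ ×ˢ (Set.univ : Set (PairLabels d)))) = 0 := by
    refine le_zero_iff.mp (le_trans (measure_mono Set.inter_subset_right) ?_)
    rw [hAM, Measure.prod_prod, good_compl_zero hp hp1 i1 i2, zero_mul]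
  -- cell partition sums
  have hcells : ∀ t : Bool, (iidBool (Site d) p) (⋃ z : ℤ × ℤ × ℤ × ℤ, Cell i1 i2 t z)
      = wgt p t := by
    intro t
    rw [← cell_union i1 i2 t, measure_inter_conull (good_compl_zero hp hp1 i1 i2)]
    exact iid_one hp hp1 (0 : Site d) t
  have hUmeas1 : ∀ z : ℤ × ℤ × ℤ × ℤ,
      MeasurableSet (Cell i1 i2 true z ×ˢ Lab1 i1 i2 B1 Bm1 B2 Bm2 z) := fun z =>
    (measurableSet_Cell i1 i2 true z).prod (Lab1_meas i1 i2 B1 Bm1 B2 Bm2 z)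
  have hUmeas0 : ∀ z : ℤ × ℤ × ℤ × ℤ,
      MeasurableSet (Cell i1 i2 false z ×ˢ Lab0 i1 i2 B1 Bm1 B2 Bm2 z) := fun z =>
    (measurableSet_Cell i1 i2 false z).prod (Lab0_meas i1 i2 B1 Bm1 B2 Bm2 z)
  have hUdisj1 : Pairwise (Function.onFun Disjoint
      fun z => Cell i1 i2 true z ×ˢ Lab1 i1 i2 B1 Bm1 B2 Bm2 z) := by
    intro z z' hzz
    refine Set.disjoint_left.mpr ?_
    rintro ⟨ω, ζ⟩ ⟨hω, -⟩ ⟨hω', -⟩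
    exact Set.disjoint_left.mp (Cell_disjoint i1 i2 true true z z' (Or.inr hzz)) hω hω'
  have hUdisj0 : Pairwise (Function.onFun Disjoint
      fun z => Cell i1 i2 false z ×ˢ Lab0 i1 i2 B1 Bm1 B2 Bm2 z) := by
    intro z z' hzz
    refine Set.disjoint_left.mpr ?_
    rintro ⟨ω, ζ⟩ ⟨hω, -⟩ ⟨hω', -⟩
    exact Set.disjoint_left.mp (Cell_disjoint i1 i2 false false z z' (Or.inr hzz)) hω hω'
  have hCdisj : ∀ t : Bool, Pairwise (Function.onFun Disjoint fun z => Cell i1 i2 t z) :=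
    fun t z z' hzz => Cell_disjoint i1 i2 t t z z' (Or.inr hzz)
  -- value of the occupied part
  have hU1 : alignMeasure d p lam
      (⋃ z : ℤ × ℤ × ℤ × ℤ, Cell i1 i2 true z ×ˢ Lab1 i1 i2 B1 Bm1 B2 Bm2 z)
      = ENNReal.ofReal p * (wgt lam B1 * wgt lam Bm1 * wgt lam B2 * wgt lam Bm2) := by
    rw [hAM, measure_iUnion hUdisj1 hUmeas1]
    have hterm : ∀ z : ℤ × ℤ × ℤ × ℤ,
        ((iidBool (Site d) p).prod (iidBool (Site d × Site d) lam))
          (Cell i1 i2 true z ×ˢ Lab1 i1 i2 B1 Bm1 B2 Bm2 z)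
        = iidBool (Site d) p (Cell i1 i2 true z) *
            (wgt lam B1 * wgt lam Bm1 * wgt lam B2 * wgt lam Bm2) := by
      intro z
      rw [Measure.prod_prod]
      by_cases hv : z.1 < 0 ∧ 0 < z.2.1 ∧ z.2.2.1 < 0 ∧ 0 < z.2.2.2
      · rw [Lab1_val hl hl1 h12 B1 Bm1 B2 Bm2 hv]
      · have hcell : Cell i1 i2 true z = ∅ := by
          rw [Set.eq_empty_iff_forall_notMem]
          rintro ω ⟨h0, hA, hB, hC, hD⟩
          exact hv ⟨hA.1, hB.1, hC.1, hD.1⟩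
        rw [hcell, measure_empty, zero_mul, zero_mul]
    rw [tsum_congr hterm, ENNReal.tsum_mul_right,
      ← measure_iUnion (hCdisj true) (fun z => measurableSet_Cell i1 i2 true z),
      hcells true]
    rfl
  -- value of the vacant part
  have hU0 : alignMeasure d p lam
      (⋃ z : ℤ × ℤ × ℤ × ℤ, Cell i1 i2 false z ×ˢ Lab0 i1 i2 B1 Bm1 B2 Bm2 z)
      = ENNReal.ofReal (1 - p) *
          ((if B1 = Bm1 then wgt lam B1 else 0) * (if B2 = Bm2 then wgt lam B2 else 0)) := by
    rw [hAM, measure_iUnion hUdisj0 hUmeas0]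
    have hterm : ∀ z : ℤ × ℤ × ℤ × ℤ,
        ((iidBool (Site d) p).prod (iidBool (Site d × Site d) lam))
          (Cell i1 i2 false z ×ˢ Lab0 i1 i2 B1 Bm1 B2 Bm2 z)
        = iidBool (Site d) p (Cell i1 i2 false z) *
            ((if B1 = Bm1 then wgt lam B1 else 0) * (if B2 = Bm2 then wgt lam B2 else 0)) := by
      intro z
      rw [Measure.prod_prod]
      by_cases hv : z.1 < 0 ∧ 0 < z.2.1 ∧ z.2.2.1 < 0 ∧ 0 < z.2.2.2
      · rw [Lab0_val hl hl1 h12 B1 Bm1 B2 Bm2 hv]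
      · have hcell : Cell i1 i2 false z = ∅ := by
          rw [Set.eq_empty_iff_forall_notMem]
          rintro ω ⟨h0, hA, hB, hC, hD⟩
          exact hv ⟨hA.1, hB.1, hC.1, hD.1⟩
        rw [hcell, measure_empty, zero_mul, zero_mul]
    rw [tsum_congr hterm, ENNReal.tsum_mul_right,
      ← measure_iUnion (hCdisj false) (fun z => measurableSet_Cell i1 i2 false z),
      hcells false]
    rfl
  -- disjointness of the two unions
  have hUU : Disjoint
      (⋃ z : ℤ × ℤ × ℤ × ℤ, Cell i1 i2 true z ×ˢ Lab1 i1 i2 B1 Bm1 B2 Bm2 z)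
      (⋃ z : ℤ × ℤ × ℤ × ℤ, Cell i1 i2 false z ×ˢ Lab0 i1 i2 B1 Bm1 B2 Bm2 z) := by
    refine Set.disjoint_left.mpr ?_
    rintro ⟨ω, ζ⟩ h h'
    obtain ⟨z, hω, -⟩ := Set.mem_iUnion.mp h
    obtain ⟨z', hω', -⟩ := Set.mem_iUnion.mp h'
    have h2 := hω'.1
    rw [hω.1] at h2
    exact Bool.noConfusion h2
  have hUmeas0' : MeasurableSet
      (⋃ z : ℤ × ℤ × ℤ × ℤ, Cell i1 i2 false z ×ˢ Lab0 i1 i2 B1 Bm1 B2 Bm2 z) :=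
    MeasurableSet.iUnion hUmeas0
  calc alignMeasure d p lam E
      = alignMeasure d p lam
        (((⋃ z : ℤ × ℤ × ℤ × ℤ, Cell i1 i2 true z ×ˢ Lab1 i1 i2 B1 Bm1 B2 Bm2 z) ∪
          (⋃ z : ℤ × ℤ × ℤ × ℤ, Cell i1 i2 false z ×ˢ Lab0 i1 i2 B1 Bm1 B2 Bm2 z)) ∪
          (E ∩ ((Good i1 i2)ᶜ ×ˢ (Set.univ : Set (PairLabels d))))) := by rw [← hdecomp]
    _ = alignMeasure d p lam
        ((⋃ z : ℤ × ℤ × ℤ × ℤ, Cell i1 i2 true z ×ˢ Lab1 i1 i2 B1 Bm1 B2 Bm2 z) ∪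
          (⋃ z : ℤ × ℤ × ℤ × ℤ, Cell i1 i2 false z ×ˢ Lab0 i1 i2 B1 Bm1 B2 Bm2 z)) :=
        le_antisymm (le_trans (measure_union_le _ _) (by rw [hnull, add_zero]))
          (measure_mono Set.subset_union_left)
    _ = _ := by rw [measure_union hUU hUmeas0', hU1, hU0]

lemma wgt_true (p : ℝ) : wgt p true = ENNReal.ofReal p := rfl

lemma wgt_false (p : ℝ) : wgt p false = ENNReal.ofReal (1 - p) := rfl

end Aux

/-- The marginal law of the four edges joining the origin to
`±e₁, ±e₂` fails the lattice condition: with `x` the local configuration where exactly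
`f₁, f₋₁` are open and `y` the one where exactly `f₁, f₂` are open,
`μ(x∨y)·μ(x∧y) − μ(x)·μ(y) = pλ³(1−λ)·pλ(1−λ)³ − (pλ²(1−λ)² + (1−p)λ(1−λ))·pλ²(1−λ)² < 0`. -/
theorem lattice_condition_fails (d : ℕ) (hd : 2 ≤ d) (p lam : ℝ)
    (hp : p ∈ Set.Ioo (0 : ℝ) 1) (hlam : lam ∈ Set.Ioo (0 : ℝ) 1)
    (muloc : Bool → Bool → Bool → Bool → ℝ)
    (hmu : muloc = fun b1 bm1 b2 bm2 =>
      (alignMeasure d p lam {ξ |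
        edgeState ξ ((0 : Site d), (⟨0, by omega⟩ : Fin d)) = b1 ∧
        edgeState ξ (seg (0 : Site d) ⟨0, by omega⟩ (-1), (⟨0, by omega⟩ : Fin d)) = bm1 ∧
        edgeState ξ ((0 : Site d), (⟨1, by omega⟩ : Fin d)) = b2 ∧
        edgeState ξ (seg (0 : Site d) ⟨1, by omega⟩ (-1), (⟨1, by omega⟩ : Fin d)) = bm2}).toReal) :
    muloc true true true false * muloc true false false false -
        muloc true true false false * muloc true false true false =
      (p * lam ^ 3 * (1 - lam)) * (p * lam * (1 - lam) ^ 3) -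
        (p * lam ^ 2 * (1 - lam) ^ 2 + (1 - p) * lam * (1 - lam)) *
          (p * lam ^ 2 * (1 - lam) ^ 2) ∧
    (p * lam ^ 3 * (1 - lam)) * (p * lam * (1 - lam) ^ 3) -
        (p * lam ^ 2 * (1 - lam) ^ 2 + (1 - p) * lam * (1 - lam)) *
          (p * lam ^ 2 * (1 - lam) ^ 2) < 0 := by
  obtain ⟨hp0, hp1⟩ := hp
  obtain ⟨hl0, hl1⟩ := hlam
  have hne : (⟨0, by omega⟩ : Fin d) ≠ (⟨1, by omega⟩ : Fin d) := by
    simp [Fin.ext_iff]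
  have key := fun B1 Bm1 B2 Bm2 =>
    align_local_prob d hp0 hp1 hl0 hl1 ⟨0, by omega⟩ ⟨1, by omega⟩ hne B1 Bm1 B2 Bm2
  have tp : (ENNReal.ofReal p).toReal = p := ENNReal.toReal_ofReal hp0.le
  have tl : (ENNReal.ofReal lam).toReal = lam := ENNReal.toReal_ofReal hl0.le
  have tl' : (ENNReal.ofReal (1 - lam)).toReal = 1 - lam :=
    ENNReal.toReal_ofReal (by linarith)
  have tp' : (ENNReal.ofReal (1 - p)).toReal = 1 - p :=
    ENNReal.toReal_ofReal (by linarith)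
  have hifp : (if (true : Bool) = true then wgt lam true else 0) = wgt lam true := if_pos rfl
  have hifp' : (if (false : Bool) = false then wgt lam false else 0) = wgt lam false :=
    if_pos rfl
  have hifn : (if (true : Bool) = false then wgt lam true else 0) = 0 := if_neg (by simp)
  have v1 : muloc true true true false = p * (lam * lam * lam * (1 - lam)) := by
    simp only [hmu]
    rw [key true true true false, hifp, hifn, mul_zero, mul_zero, add_zero]
    simp only [wgt_true, wgt_false, ENNReal.toReal_mul, tp, tl, tl', tp']
  have v2 : muloc true false false false
      = p * (lam * (1 - lam) * (1 - lam) * (1 - lam)) := by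
    simp only [hmu]
    rw [key true false false false, hifn, zero_mul, mul_zero, add_zero]
    simp only [wgt_true, wgt_false, ENNReal.toReal_mul, tp, tl, tl', tp']
  have v4 : muloc true false true false = p * (lam * (1 - lam) * lam * (1 - lam)) := by
    simp only [hmu]
    rw [key true false true false, hifn, zero_mul, mul_zero, add_zero]
    simp only [wgt_true, wgt_false, ENNReal.toReal_mul, tp, tl, tl', tp']
  have v3 : muloc true true false false
      = p * (lam * lam * (1 - lam) * (1 - lam)) + (1 - p) * (lam * (1 - lam)) := by
    simp only [hmu]
    rw [key true true false false]
    rw [hifp, hifp', wgt_true, wgt_false]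
    have hA : ENNReal.ofReal p * (ENNReal.ofReal lam * ENNReal.ofReal lam *
        ENNReal.ofReal (1 - lam) * ENNReal.ofReal (1 - lam)) ≠ ⊤ :=
      ENNReal.mul_ne_top ENNReal.ofReal_ne_top
        (ENNReal.mul_ne_top (ENNReal.mul_ne_top
          (ENNReal.mul_ne_top ENNReal.ofReal_ne_top ENNReal.ofReal_ne_top)
          ENNReal.ofReal_ne_top) ENNReal.ofReal_ne_top)
    have hB : ENNReal.ofReal (1 - p) * (ENNReal.ofReal lam * ENNReal.ofReal (1 - lam)) ≠ ⊤ :=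
      ENNReal.mul_ne_top ENNReal.ofReal_ne_top
        (ENNReal.mul_ne_top ENNReal.ofReal_ne_top ENNReal.ofReal_ne_top)
    rw [ENNReal.toReal_add hA hB]
    simp only [ENNReal.toReal_mul, tp, tl, tl', tp']
  constructor
  · rw [v1, v2, v3, v4]
    ring
  · have heq : (p * lam ^ 3 * (1 - lam)) * (p * lam * (1 - lam) ^ 3) -
        (p * lam ^ 2 * (1 - lam) ^ 2 + (1 - p) * lam * (1 - lam)) *
          (p * lam ^ 2 * (1 - lam) ^ 2)
        = -(p * (1 - p) * lam ^ 3 * (1 - lam) ^ 3) := by ring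
    rw [heq]
    have hpos : 0 < p * (1 - p) * lam ^ 3 * (1 - lam) ^ 3 := by
      have h1 : 0 < 1 - p := by linarith
      have h2 : 0 < 1 - lam := by linarith
      positivity
    linarith

end AlignmentPercolation
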